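/- Consider a β-safe sequence of bid profiles b^0, ..., b^T where at each step a bidder chosen uniformly at random updates his bid α-aggressively (0 < α ≤ 1 ≤ β), with T = n ≥ 2. Then E[SW(b^T)] ≥ (α/(2(1+4α)β))·OPT(v). -/

import Mathlib

open Finset

/-- Maximum bid on item `j` among bidders other than `i` (bids assumed nonnegative). -/
noncomputable def maxOther {n m : ℕ} (b : Fin n → Fin m → ℝ) (i : Fin n) (j : Fin m) : ℝ :=
  (((Finset.univ.erase i).sup fun k => Real.toNNReal (b k j)) : NNReal)


lemma aux_pow1 (b : ℕ) : ∀ k : ℕ, b^k * (b+1+k) ≤ (b+1)^(k+1) := by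
  intro k
  induction k with
  | zero => simp
  | succ k ih =>
    have e1 : b^(k+1) * (b+1+(k+1)) = b * (b^k * (b+1+k)) + b^(k+1) := by ring
    have e2 : (b+1)^(k+2) = b * (b+1)^(k+1) + (b+1)^(k+1) := by ring
    rw [e1, e2]
    exact Nat.add_le_add (Nat.mul_le_mul_left _ ih) (Nat.pow_le_pow_left (by omega) _)

lemma aux_pow_succ (x : ℕ) : ∀ k : ℕ, x^(k+1) + (k+1) * x^k ≤ (x+1)^(k+1) := by
  intro k
  induction k with
  | zero => simp
  | succ k ih =>
    have e1 : (x+1) * (x^(k+1) + (k+1) * x^k) =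
        (x^(k+2) + (k+2) * x^(k+1)) + (k+1) * x^k := by ring
    have e2 : (x+1)^(k+2) = (x+1) * (x+1)^(k+1) := by ring
    calc x^(k+2) + (k+2) * x^(k+1)
        ≤ (x+1) * (x^(k+1) + (k+1) * x^k) := by rw [e1]; exact Nat.le_add_right _ _
      _ ≤ (x+1) * (x+1)^(k+1) := Nat.mul_le_mul_left _ ih
      _ = (x+1)^(k+2) := e2.symm

lemma aux_two (n : ℕ) (hn : 1 ≤ n) : 2 * (n-1)^n ≤ n^n := by
  obtain ⟨k, rfl⟩ : ∃ k, n = k + 1 := ⟨n-1, by omega⟩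
  simp only [Nat.add_sub_cancel]
  calc 2 * k^(k+1) = k^(k+1) + k * k^k := by ring
    _ ≤ k^(k+1) + (k+1) * k^k := Nat.add_le_add_left (Nat.mul_le_mul_right _ (by omega)) _
    _ ≤ (k+1)^(k+1) := aux_pow_succ k k

lemma aux_four (n : ℕ) (hn : 2 ≤ n) : n^n ≤ 4 * (n-1)^n := by
  induction n with
  | zero => omega
  | succ n ih =>
    rcases Nat.lt_or_ge n 2 with h | h
    · interval_cases n
      · omega
      · norm_num
    · have IH := ih h
      simp only [Nat.add_sub_cancel]
      obtain ⟨c, rfl⟩ : ∃ c, n = c + 1 := ⟨n-1, by omega⟩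
      have hc : 1 ≤ c := by omega
      simp only [Nat.add_sub_cancel] at IH
      -- IH : (c+1)^(c+1) ≤ 4 * c^(c+1)
      -- goal : (c+2)^(c+2) ≤ 4 * (c+1)^(c+2)
      have key : (c+2)^(c+2) * (c^(c+1) * (c+1)) ≤ (c+1)^(2*c+4) := by
        have h1 := aux_pow1 (c^2+2*c) (c+1)
        have e0 : c^2+2*c = c*(c+2) := by ring
        have e1 : (c^2+2*c)^(c+1) * (c^2+2*c+1+(c+1)) =
            (c+2)^(c+2) * (c^(c+1) * (c+1)) := by
          rw [e0, mul_pow]; ring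
        have e2 : (c^2+2*c+1)^(c+1+1) = (c+1)^(2*c+4) := by
          have : c^2+2*c+1 = (c+1)^2 := by ring
          rw [this, ← pow_mul]; ring_nf
        rw [e1, e2] at h1
        exact h1
      have expand : (c+1)^(2*c+4) = (c+1)^(c+2) * (c+1)^(c+1) * (c+1) := by
        rw [← pow_add, ← pow_succ]; ring_nf
      have h6 : (c+1)^(2*c+4) ≤ (4 * (c+1)^(c+2)) * (c^(c+1) * (c+1)) := by
        rw [expand]
        calc (c+1)^(c+2) * (c+1)^(c+1) * (c+1)
            ≤ (c+1)^(c+2) * (4 * c^(c+1)) * (c+1) :=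
              Nat.mul_le_mul_right _ (Nat.mul_le_mul_left _ IH)
          _ = (4 * (c+1)^(c+2)) * (c^(c+1) * (c+1)) := by ring
      have hpos : 0 < c^(c+1) * (c+1) := by positivity
      exact Nat.le_of_mul_le_mul_right (key.trans h6) hpos

open Finset

/-- Number of sequences that agree with `σ₀` before time `c` and lie in `E` from time `c` on. -/
lemma card_filterClass (n c : ℕ) (σ₀ : Fin n → Fin n) (E : Finset (Fin n)) :
    (univ.filter fun σ : Fin n → Fin n =>
        ∀ t : Fin n, ((t:ℕ) < c → σ t = σ₀ t) ∧ (c ≤ (t:ℕ) → σ t ∈ E)).card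
      = E.card ^ (n - c) := by
  have hset : (univ.filter fun σ : Fin n → Fin n =>
        ∀ t : Fin n, ((t:ℕ) < c → σ t = σ₀ t) ∧ (c ≤ (t:ℕ) → σ t ∈ E))
      = Fintype.piFinset (fun t : Fin n => if (t:ℕ) < c then {σ₀ t} else E) := by
    ext σ
    simp only [mem_filter, mem_univ, true_and, Fintype.mem_piFinset]
    constructor
    · intro h t
      by_cases ht : (t:ℕ) < c
      · simp [ht, (h t).1 ht]
      · simp [ht, (h t).2 (by omega)]
    · intro h t
      have := h t
      by_cases ht : (t:ℕ) < c
      · simp [ht] at this; exact ⟨fun _ => this, fun hc => by omega⟩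
      · simp [ht] at this; exact ⟨fun hc => by omega, fun _ => this⟩
  rw [hset, Fintype.card_piFinset]
  have : ∀ t : Fin n, (if (t:ℕ) < c then ({σ₀ t} : Finset (Fin n)) else E).card
      = (if (t:ℕ) < c then 1 else E.card) := by
    intro t; by_cases ht : (t:ℕ) < c <;> simp [ht]
  rw [Finset.prod_congr rfl (fun t _ => this t)]
  rw [Fin.prod_univ_eq_prod_range (fun t => if t < c then 1 else E.card) n]
  rw [Finset.prod_ite]
  simp only [Finset.prod_const_one, Finset.prod_const, one_mul]
  congr 1
  have : (Finset.range n).filter (fun t => ¬ t < c) = Finset.Ico c n := by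
    ext t; simp [Finset.mem_range, Finset.mem_Ico]; omega
  rw [this, Nat.card_Ico]

/-- Sum over a partition. -/
lemma sum_partition {n m : ℕ} (P : Fin n → Finset (Fin m))
    (hP : ∀ j : Fin m, ∃! i : Fin n, j ∈ P i) (f : Fin m → ℝ) :
    ∑ j, f j = ∑ i, ∑ j ∈ P i, f j := by
  have hdisj : ∀ i₁ ∈ (univ : Finset (Fin n)), ∀ i₂ ∈ univ, i₁ ≠ i₂ →
      Disjoint (P i₁) (P i₂) := by
    intro i₁ _ i₂ _ hne
    rw [Finset.disjoint_left]
    intro j h1 h2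
    obtain ⟨i, _, hu⟩ := hP j
    exact hne ((hu i₁ h1).trans (hu i₂ h2).symm)
  have huniv : (univ : Finset (Fin m)) = univ.biUnion P := by
    ext j
    simp only [mem_univ, mem_biUnion, true_iff]
    obtain ⟨i, hi, _⟩ := hP j
    exact ⟨i, trivial, hi⟩
  rw [show ∑ j, f j = ∑ j ∈ univ.biUnion P, f j from by rw [← huniv]]
  exact Finset.sum_biUnion hdisj
open Finset

noncomputable def Qb {n m : ℕ} (B : (Fin n → Fin n) → ℕ → Fin n → Fin m → ℝ)
    (σ : Fin n → Fin n) (t : ℕ) (j : Fin m) : NNReal :=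
  Finset.univ.sup fun i => Real.toNNReal (B σ t i j)

noncomputable def Mb {n m : ℕ} (B : (Fin n → Fin n) → ℕ → Fin n → Fin m → ℝ)
    (σ : Fin n → Fin n) (s : ℕ) (j : Fin m) : NNReal :=
  (Finset.Icc s n).sup fun t => Qb B σ t j

def cls (n : ℕ) (c : ℕ) (σ₀ : Fin n → Fin n) : Finset (Fin n → Fin n) :=
  Finset.univ.filter fun σ => ∀ t : Fin n, (t : ℕ) < c → σ t = σ₀ t

lemma card_cls (n c : ℕ) (σ₀ : Fin n → Fin n) : (cls n c σ₀).card = n ^ (n - c) := by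
  have h := card_filterClass n c σ₀ Finset.univ
  have he : (Finset.univ.filter fun σ : Fin n → Fin n =>
      ∀ t : Fin n, ((t:ℕ) < c → σ t = σ₀ t) ∧ (c ≤ (t:ℕ) → σ t ∈ Finset.univ)) = cls n c σ₀ := by
    apply Finset.filter_congr
    intro σ _
    simp only [Finset.mem_univ, iff_true]
    constructor
    · intro h t ht; exact (h t).1 ht
    · intro h t; exact ⟨h t, fun _ => trivial⟩
  rw [he, Finset.card_univ] at h
  simpa using h

/-- If bidder `i` is not activated during `[s, t)` then his bid does not change. -/
lemma persist {n m : ℕ} {B : (Fin n → Fin n) → ℕ → Fin n → Fin m → ℝ}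
    (hupd : ∀ (σ : Fin n → Fin n) (t : Fin n) (k : Fin n), k ≠ σ t →
      ∀ j, B σ (t : ℕ) k j = B σ ((t : ℕ) + 1) k j)
    (σ : Fin n → Fin n) (i : Fin n) (j : Fin m) (s : ℕ) :
    ∀ t : ℕ, s ≤ t → t ≤ n → (∀ r : Fin n, s ≤ (r:ℕ) → (r:ℕ) < t → σ r ≠ i) →
      B σ t i j = B σ s i j := by
  intro t
  induction t with
  | zero => intro h1 _ _; have : s = 0 := by omega
            subst this; rfl
  | succ t ih =>
    intro h1 h2 havoid
    rcases Nat.eq_or_lt_of_le h1 with he | hlt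
    · rw [← he]
    · have ht : t < n := by omega
      have hne : i ≠ σ ⟨t, ht⟩ := by
        intro hc
        exact havoid ⟨t, ht⟩ (by simpa using by omega) (by simp) hc.symm
      have hstep := hupd σ ⟨t, ht⟩ i hne j
      simp only at hstep
      rw [← hstep]
      exact ih (by omega) (by omega) (fun r hr1 hr2 => havoid r hr1 (by omega))

lemma keyG {n m : ℕ} (hn : 2 ≤ n) (B : (Fin n → Fin n) → ℕ → Fin n → Fin m → ℝ)
    (hupd : ∀ (σ : Fin n → Fin n) (t : Fin n) (k : Fin n), k ≠ σ t →
      ∀ j, B σ (t : ℕ) k j = B σ ((t : ℕ) + 1) k j)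
    (hadapted : ∀ (σ σ' : Fin n → Fin n) (t : ℕ), t ≤ n →
      (∀ s : Fin n, (s : ℕ) < t → σ s = σ' s) → ∀ i j, B σ t i j = B σ' t i j)
    (j : Fin m) :
    ∀ k : ℕ, k ≤ n → ∀ σ₀ : Fin n → Fin n,
      ((n:ℝ) - 1) ^ k * ∑ σ ∈ cls n (n - k) σ₀, (Mb B σ (n - k) j : ℝ)
        ≤ (n:ℝ) ^ k * ∑ σ ∈ cls n (n - k) σ₀, (Qb B σ n j : ℝ) := by
  intro k
  induction k with
  | zero =>
    intro _ σ₀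
    simp only [Nat.sub_zero, pow_zero, one_mul]
    apply le_of_eq
    apply Finset.sum_congr rfl
    intro σ _
    congr 1
    unfold Mb
    rw [show Finset.Icc n n = {n} from Finset.Icc_self n, Finset.sup_singleton]
  | succ k ih =>
    intro hk σ₀
    set s : ℕ := n - (k+1) with hs_def
    have hs : s < n := by omega
    have hs1 : s + 1 = n - k := by omega
    set sFin : Fin n := ⟨s, hs⟩ with hsFin
    -- the maximizing bidder at time s under prefix σ₀
    obtain ⟨istar, -, hist⟩ := Finset.exists_mem_eq_sup (Finset.univ : Finset (Fin n))
      ⟨⟨0, by omega⟩, Finset.mem_univ _⟩ (fun i => Real.toNNReal (B σ₀ s i j))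
    have histQ : Qb B σ₀ s j = Real.toNNReal (B σ₀ s istar j) := hist
    -- fiber decomposition
    have hfib : ∀ (g : (Fin n → Fin n) → ℝ),
        ∑ σ ∈ cls n s σ₀, g σ
          = ∑ a : Fin n, ∑ σ ∈ cls n (s+1) (Function.update σ₀ sFin a), g σ := by
      intro g
      rw [← Finset.sum_fiberwise_of_maps_to (g := fun σ => σ sFin)
        (fun σ _ => Finset.mem_univ (σ sFin)) g]
      apply Finset.sum_congr rfl
      intro a _
      apply Finset.sum_congr _ (fun _ _ => rfl)
      ext σ
      simp only [cls, Finset.mem_filter, Finset.mem_univ, true_and]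
      constructor
      · rintro ⟨h1, h2⟩ t ht
        rcases Nat.lt_or_ge (t:ℕ) s with h | h
        · rw [Function.update_apply]
          rw [if_neg (by intro hc; rw [hc] at h; simp [hsFin] at h)]
          exact h1 t h
        · have : t = sFin := by
            apply Fin.ext; simp [hsFin]; omega
          rw [this, Function.update_self]
          exact this ▸ h2
      · intro h
        constructor
        · intro t ht
          have := h t (by omega)
          rwa [Function.update_apply, if_neg
            (by intro hc; rw [hc] at ht; simp [hsFin] at ht)] at this
        · have := h sFin (by simp [hsFin])
          rwa [Function.update_self] at this
    -- per-branch facts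
    have hmem_cls : ∀ a (σ : Fin n → Fin n), σ ∈ cls n (s+1) (Function.update σ₀ sFin a) →
        (∀ t : Fin n, (t:ℕ) < s → σ t = σ₀ t) ∧ σ sFin = a := by
      intro a σ hσ
      simp only [cls, Finset.mem_filter, Finset.mem_univ, true_and] at hσ
      constructor
      · intro t ht
        have := hσ t (by omega)
        rwa [Function.update_apply, if_neg
          (by intro hc; rw [hc] at ht; simp [hsFin] at ht)] at this
      · have := hσ sFin (by simp [hsFin])
        rwa [Function.update_self] at this
    have hQs : ∀ a (σ : Fin n → Fin n), σ ∈ cls n (s+1) (Function.update σ₀ sFin a) →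
        Qb B σ s j = Qb B σ₀ s j := by
      intro a σ hσ
      unfold Qb
      apply Finset.sup_congr rfl
      intro i _
      rw [hadapted σ σ₀ s (by omega) (hmem_cls a σ hσ).1 i j]
    have hMsplit : ∀ (σ : Fin n → Fin n), Mb B σ s j = Qb B σ s j ⊔ Mb B σ (s+1) j := by
      intro σ
      unfold Mb
      rw [show Finset.Icc s n = insert s (Finset.Icc (s+1) n) from by
        ext t; simp only [Finset.mem_Icc, Finset.mem_insert]; omega]
      rw [Finset.sup_insert]
    -- branches a ≠ istar : Mb σ s = Mb σ (s+1)
    have hbranch_ne : ∀ a, a ≠ istar → ∀ (σ : Fin n → Fin n),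
        σ ∈ cls n (s+1) (Function.update σ₀ sFin a) → Mb B σ s j = Mb B σ (s+1) j := by
      intro a ha σ hσ
      rw [hMsplit σ, sup_eq_right.mpr]
      have h1 : B σ s istar j = B σ₀ s istar j :=
        hadapted σ σ₀ s (by omega) (hmem_cls a σ hσ).1 istar j
      have h2 : B σ (s+1) istar j = B σ s istar j := by
        have := hupd σ sFin istar (by rw [(hmem_cls a σ hσ).2]; exact fun hc => ha hc.symm) j
        simpa [hsFin] using this.symm
      calc Qb B σ s j = Real.toNNReal (B σ (s+1) istar j) := by
            rw [hQs a σ hσ, histQ, h2, h1]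
        _ ≤ Qb B σ (s+1) j := Finset.le_sup (f := fun i => Real.toNNReal (B σ (s+1) i j)) (Finset.mem_univ istar)
        _ ≤ Mb B σ (s+1) j := Finset.le_sup (f := fun t => Qb B σ t j) (Finset.mem_Icc.mpr ⟨le_refl _, by omega⟩)
    -- branch istar : Mb σ s ≤ Q + Mb σ (s+1)
    have hbranch_eq : ∀ (σ : Fin n → Fin n),
        σ ∈ cls n (s+1) (Function.update σ₀ sFin istar) →
        (Mb B σ s j : ℝ) ≤ (Qb B σ₀ s j : ℝ) + (Mb B σ (s+1) j : ℝ) := by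
      intro σ hσ
      rw [hMsplit σ, hQs istar σ hσ]
      push_cast
      exact max_le (le_add_of_nonneg_right (by positivity))
        (le_add_of_nonneg_left (by positivity))
    -- avoiders: σ that agree with σ₀ before s and never activate istar from s on
    set Av : Finset (Fin n → Fin n) := Finset.univ.filter fun σ =>
      ∀ t : Fin n, ((t:ℕ) < s → σ t = σ₀ t) ∧ (s ≤ (t:ℕ) → σ t ∈ Finset.univ.erase istar)
      with hAv_def
    have hAvcard : Av.card = (n-1)^(k+1) := by
      rw [hAv_def, card_filterClass n s σ₀ (Finset.univ.erase istar)]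
      rw [Finset.card_erase_of_mem (Finset.mem_univ istar), Finset.card_univ, Fintype.card_fin]
      congr 1
      omega
    have hAvsub : Av ⊆ cls n s σ₀ := by
      intro σ hσ
      simp only [hAv_def, Finset.mem_filter, Finset.mem_univ, true_and] at hσ
      simp only [cls, Finset.mem_filter, Finset.mem_univ, true_and]
      exact fun t ht => (hσ t).1 ht
    have hAvQ : ∀ σ ∈ Av, (Qb B σ₀ s j : ℝ) ≤ (Qb B σ n j : ℝ) := by
      intro σ hσ
      simp only [hAv_def, Finset.mem_filter, Finset.mem_univ, true_and] at hσ
      have havoid : ∀ r : Fin n, s ≤ (r:ℕ) → (r:ℕ) < n → σ r ≠ istar := by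
        intro r hr _ hc
        have := (hσ r).2 hr
        rw [hc] at this
        exact absurd this (by simp)
      have h1 : B σ n istar j = B σ s istar j :=
        persist hupd σ istar j s n (by omega) le_rfl havoid
      have h2 : B σ s istar j = B σ₀ s istar j :=
        hadapted σ σ₀ s (by omega) (fun t ht => (hσ t).1 ht) istar j
      rw [histQ]
      exact_mod_cast (h2 ▸ h1 ▸ Finset.le_sup (f := fun i => Real.toNNReal (B σ n i j))
        (Finset.mem_univ istar) : Real.toNNReal (B σ₀ s istar j) ≤ Qb B σ n j)
    set QR : ℝ := (Qb B σ₀ s j : ℝ) with hQR_def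
    have hQRnn : 0 ≤ QR := NNReal.coe_nonneg _
    have hn1 : (0:ℝ) ≤ (n:ℝ) - 1 := by
      have : (2:ℝ) ≤ (n:ℝ) := by exact_mod_cast hn
      linarith
    have hcast : ((n:ℝ)-1) = ((n-1 : ℕ) : ℝ) := by
      rw [Nat.cast_sub (by omega)]; norm_num
    have hsumAv : ((n:ℝ)-1)^(k+1) * QR ≤ ∑ σ ∈ cls n s σ₀, (Qb B σ n j : ℝ) := by
      calc ((n:ℝ)-1)^(k+1) * QR = Av.card • QR := by
            rw [hAvcard, hcast, nsmul_eq_mul]; push_cast; ring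
        _ = ∑ _σ ∈ Av, QR := by rw [Finset.sum_const]
        _ ≤ ∑ σ ∈ Av, (Qb B σ n j : ℝ) := Finset.sum_le_sum hAvQ
        _ ≤ ∑ σ ∈ cls n s σ₀, (Qb B σ n j : ℝ) :=
            Finset.sum_le_sum_of_subset_of_nonneg hAvsub
              (fun _ _ _ => NNReal.coe_nonneg _)
    have hbcard : ∀ a, (cls n (s+1) (Function.update σ₀ sFin a)).card = n^k := by
      intro a
      rw [card_cls]
      congr 1
      omega
    have hIH : ∀ a, ((n:ℝ)-1)^k * ∑ σ ∈ cls n (s+1) (Function.update σ₀ sFin a),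
        (Mb B σ (s+1) j : ℝ) ≤ (n:ℝ)^k * ∑ σ ∈ cls n (s+1) (Function.update σ₀ sFin a),
        (Qb B σ n j : ℝ) := by
      intro a
      have := ih (by omega) (Function.update σ₀ sFin a)
      simpa only [← hs1] using this
    have hper : ∀ a, ∑ σ ∈ cls n (s+1) (Function.update σ₀ sFin a), (Mb B σ s j : ℝ)
        ≤ (∑ σ ∈ cls n (s+1) (Function.update σ₀ sFin a), (Mb B σ (s+1) j : ℝ))
          + (if a = istar then (n:ℝ)^k * QR else 0) := by
      intro a
      by_cases ha : a = istar
      · subst ha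
        rw [if_pos rfl]
        calc ∑ σ ∈ cls n (s+1) (Function.update σ₀ sFin a), (Mb B σ s j : ℝ)
            ≤ ∑ σ ∈ cls n (s+1) (Function.update σ₀ sFin a), (QR + (Mb B σ (s+1) j : ℝ)) :=
              Finset.sum_le_sum (fun σ hσ => hbranch_eq σ hσ)
          _ = (cls n (s+1) (Function.update σ₀ sFin a)).card • QR
              + ∑ σ ∈ cls n (s+1) (Function.update σ₀ sFin a), (Mb B σ (s+1) j : ℝ) := by
              rw [Finset.sum_add_distrib, Finset.sum_const]
          _ = (∑ σ ∈ cls n (s+1) (Function.update σ₀ sFin a), (Mb B σ (s+1) j : ℝ))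
              + (n:ℝ)^k * QR := by
              rw [hbcard a, nsmul_eq_mul]; push_cast; ring
      · rw [if_neg ha, add_zero]
        apply le_of_eq
        apply Finset.sum_congr rfl
        intro σ hσ
        rw [hbranch_ne a ha σ hσ]
    have step1 : ∑ σ ∈ cls n s σ₀, (Mb B σ s j : ℝ)
        ≤ (∑ a : Fin n, ∑ σ ∈ cls n (s+1) (Function.update σ₀ sFin a), (Mb B σ (s+1) j : ℝ))
          + (n:ℝ)^k * QR := by
      rw [hfib (fun σ => (Mb B σ s j : ℝ))]
      calc ∑ a : Fin n, ∑ σ ∈ cls n (s+1) (Function.update σ₀ sFin a), (Mb B σ s j : ℝ)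
          ≤ ∑ a : Fin n, ((∑ σ ∈ cls n (s+1) (Function.update σ₀ sFin a),
              (Mb B σ (s+1) j : ℝ)) + (if a = istar then (n:ℝ)^k * QR else 0)) :=
            Finset.sum_le_sum (fun a _ => hper a)
        _ = (∑ a : Fin n, ∑ σ ∈ cls n (s+1) (Function.update σ₀ sFin a),
              (Mb B σ (s+1) j : ℝ)) + (n:ℝ)^k * QR := by
            rw [Finset.sum_add_distrib, Finset.sum_ite_eq' Finset.univ istar
              (fun _ => (n:ℝ)^k * QR), if_pos (Finset.mem_univ istar)]
    have hSQfib : ∑ σ ∈ cls n s σ₀, (Qb B σ n j : ℝ)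
        = ∑ a : Fin n, ∑ σ ∈ cls n (s+1) (Function.update σ₀ sFin a), (Qb B σ n j : ℝ) :=
      hfib (fun σ => (Qb B σ n j : ℝ))
    set SM : ℝ := ∑ σ ∈ cls n s σ₀, (Mb B σ s j : ℝ) with hSM_def
    set SQ : ℝ := ∑ σ ∈ cls n s σ₀, (Qb B σ n j : ℝ) with hSQ_def
    have h1 : ((n:ℝ)-1)^k * SM ≤ (n:ℝ)^k * SQ + ((n:ℝ)-1)^k * (n:ℝ)^k * QR := by
      calc ((n:ℝ)-1)^k * SM
          ≤ ((n:ℝ)-1)^k * ((∑ a : Fin n, ∑ σ ∈ cls n (s+1) (Function.update σ₀ sFin a),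
              (Mb B σ (s+1) j : ℝ)) + (n:ℝ)^k * QR) :=
            mul_le_mul_of_nonneg_left step1 (pow_nonneg hn1 k)
        _ = (∑ a : Fin n, ((n:ℝ)-1)^k * ∑ σ ∈ cls n (s+1) (Function.update σ₀ sFin a),
              (Mb B σ (s+1) j : ℝ)) + ((n:ℝ)-1)^k * ((n:ℝ)^k * QR) := by
            rw [mul_add, Finset.mul_sum]
        _ ≤ (∑ a : Fin n, (n:ℝ)^k * ∑ σ ∈ cls n (s+1) (Function.update σ₀ sFin a),
              (Qb B σ n j : ℝ)) + ((n:ℝ)-1)^k * ((n:ℝ)^k * QR) :=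
            add_le_add (Finset.sum_le_sum (fun a _ => hIH a)) le_rfl
        _ = (n:ℝ)^k * SQ + ((n:ℝ)-1)^k * (n:ℝ)^k * QR := by
            rw [← Finset.mul_sum, ← hSQfib, hSQ_def]; ring
    calc ((n:ℝ)-1)^(k+1) * SM = ((n:ℝ)-1) * (((n:ℝ)-1)^k * SM) := by ring
      _ ≤ ((n:ℝ)-1) * ((n:ℝ)^k * SQ + ((n:ℝ)-1)^k * (n:ℝ)^k * QR) :=
          mul_le_mul_of_nonneg_left h1 hn1
      _ = ((n:ℝ)-1) * (n:ℝ)^k * SQ + (n:ℝ)^k * (((n:ℝ)-1)^(k+1) * QR) := by ring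
      _ ≤ ((n:ℝ)-1) * (n:ℝ)^k * SQ + (n:ℝ)^k * SQ := by
          have := mul_le_mul_of_nonneg_left hsumAv (pow_nonneg (by positivity : (0:ℝ) ≤ (n:ℝ)) k)
          linarith
      _ = (n:ℝ)^(k+1) * SQ := by ring
lemma maxOther_nonneg {n m : ℕ} (b : Fin n → Fin m → ℝ) (i : Fin n) (j : Fin m) :
    0 ≤ maxOther b i j := by
  unfold maxOther; exact NNReal.coe_nonneg _

lemma maxOther_le_Qb {n m : ℕ} (B : (Fin n → Fin n) → ℕ → Fin n → Fin m → ℝ)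
    (σ : Fin n → Fin n) (t : ℕ) (i : Fin n) (j : Fin m) :
    maxOther (B σ t) i j ≤ (Qb B σ t j : ℝ) := by
  unfold maxOther Qb
  exact_mod_cast NNReal.coe_le_coe.mpr (Finset.sup_mono (Finset.erase_subset _ _))

lemma sumM_le_four {n m : ℕ} (hn : 2 ≤ n) (B : (Fin n → Fin n) → ℕ → Fin n → Fin m → ℝ)
    (hupd : ∀ (σ : Fin n → Fin n) (t : Fin n) (k : Fin n), k ≠ σ t →
      ∀ j, B σ (t : ℕ) k j = B σ ((t : ℕ) + 1) k j)
    (hadapted : ∀ (σ σ' : Fin n → Fin n) (t : ℕ), t ≤ n →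
      (∀ s : Fin n, (s : ℕ) < t → σ s = σ' s) → ∀ i j, B σ t i j = B σ' t i j)
    (j : Fin m) :
    ∑ σ : Fin n → Fin n, (Mb B σ 0 j : ℝ) ≤ 4 * ∑ σ : Fin n → Fin n, (Qb B σ n j : ℝ) := by
  have hG := keyG hn B hupd hadapted j n le_rfl (fun _ => ⟨0, by omega⟩)
  have hcls : cls n (n - n) (fun _ => (⟨0, by omega⟩ : Fin n)) = Finset.univ := by
    ext σ
    simp only [cls, Finset.mem_filter, Finset.mem_univ, true_and, iff_true]
    intro t ht
    omega
  simp only [Nat.sub_self] at hG hcls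
  rw [hcls] at hG
  have hQnn : (0:ℝ) ≤ ∑ σ : Fin n → Fin n, (Qb B σ n j : ℝ) :=
    Finset.sum_nonneg (fun _ _ => NNReal.coe_nonneg _)
  have hpow : (n:ℝ)^n ≤ 4 * ((n:ℝ)-1)^n := by
    have h4 := aux_four n hn
    have hcast : ((n:ℝ)-1) = ((n-1 : ℕ) : ℝ) := by
      rw [Nat.cast_sub (by omega)]; norm_num
    rw [hcast]
    exact_mod_cast h4
  have hp1 : (0:ℝ) < ((n:ℝ)-1)^n := by
    have : (2:ℝ) ≤ (n:ℝ) := by exact_mod_cast hn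
    have : (0:ℝ) < (n:ℝ)-1 := by linarith
    positivity
  have h2 : ((n:ℝ)-1)^n * ∑ σ : Fin n → Fin n, (Mb B σ 0 j : ℝ)
      ≤ ((n:ℝ)-1)^n * (4 * ∑ σ : Fin n → Fin n, (Qb B σ n j : ℝ)) := by
    calc ((n:ℝ)-1)^n * ∑ σ : Fin n → Fin n, (Mb B σ 0 j : ℝ)
        ≤ (n:ℝ)^n * ∑ σ : Fin n → Fin n, (Qb B σ n j : ℝ) := hG
      _ ≤ (4 * ((n:ℝ)-1)^n) * ∑ σ : Fin n → Fin n, (Qb B σ n j : ℝ) :=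
          mul_le_mul_of_nonneg_right hpow hQnn
      _ = ((n:ℝ)-1)^n * (4 * ∑ σ : Fin n → Fin n, (Qb B σ n j : ℝ)) := by ring
  exact le_of_mul_le_mul_left h2 hp1

lemma sumQ {n m : ℕ} (β : ℝ) (hβ : 1 ≤ β) (v : Fin n → Finset (Fin m) → ℝ)
    (B : (Fin n → Fin n) → ℕ → Fin n → Fin m → ℝ)
    (hnonneg : ∀ σ t i j, 0 ≤ B σ t i j)
    (TA : (Fin n → Fin n) → ℕ → Fin n → Finset (Fin m))
    (hpart : ∀ σ t, ∀ j : Fin m, ∃! i : Fin n, j ∈ TA σ t i)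
    (hwin : ∀ σ t, ∀ i : Fin n, ∀ j ∈ TA σ t i, ∀ k : Fin n, B σ t k j ≤ B σ t i j)
    (hsafe : ∀ σ (t : ℕ), t ≤ n → ∀ i : Fin n,
      ∑ j ∈ TA σ t i, (B σ t i j - maxOther (B σ t) i j)
        ≤ β * (v i (TA σ t i) - ∑ j ∈ TA σ t i, maxOther (B σ t) i j))
    (σ : Fin n → Fin n) :
    ∑ j, (Qb B σ n j : ℝ) ≤ β * ∑ i, v i (TA σ n i) := by
  rw [sum_partition (TA σ n) (hpart σ n) (fun j => (Qb B σ n j : ℝ)), Finset.mul_sum]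
  apply Finset.sum_le_sum
  intro i _
  have h1 : ∀ j ∈ TA σ n i, (Qb B σ n j : ℝ) ≤ B σ n i j := by
    intro j hj
    have hsup : Qb B σ n j ≤ Real.toNNReal (B σ n i j) :=
      Finset.sup_le (fun k _ => Real.toNNReal_mono (hwin σ n i j hj k))
    calc (Qb B σ n j : ℝ) ≤ (Real.toNNReal (B σ n i j) : ℝ) := by exact_mod_cast hsup
      _ = B σ n i j := Real.coe_toNNReal _ (hnonneg σ n i j)
  have h2 : ∑ j ∈ TA σ n i, B σ n i j ≤ β * v i (TA σ n i) := by
    have hs := hsafe σ n le_rfl i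
    have hmo : 0 ≤ ∑ j ∈ TA σ n i, maxOther (B σ n) i j :=
      Finset.sum_nonneg (fun j _ => maxOther_nonneg _ _ _)
    rw [Finset.sum_sub_distrib, mul_sub] at hs
    nlinarith
  exact (Finset.sum_le_sum h1).trans h2
lemma perSigma {n m : ℕ} (hn : 2 ≤ n) (α β : ℝ) (hα : 0 < α) (hβ : 1 ≤ β)
    (v : Fin n → Finset (Fin m) → ℝ)
    (B : (Fin n → Fin n) → ℕ → Fin n → Fin m → ℝ)
    (hnonneg : ∀ σ t i j, 0 ≤ B σ t i j)
    (hupd : ∀ (σ : Fin n → Fin n) (t : Fin n) (k : Fin n), k ≠ σ t →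
      ∀ j, B σ (t : ℕ) k j = B σ ((t : ℕ) + 1) k j)
    (TA : (Fin n → Fin n) → ℕ → Fin n → Finset (Fin m))
    (hpart : ∀ σ t, ∀ j : Fin m, ∃! i : Fin n, j ∈ TA σ t i)
    (hwin : ∀ σ t, ∀ i : Fin n, ∀ j ∈ TA σ t i, ∀ k : Fin n, B σ t k j ≤ B σ t i j)
    (hsafe : ∀ σ (t : ℕ), t ≤ n → ∀ i : Fin n,
      ∑ j ∈ TA σ t i, (B σ t i j - maxOther (B σ t) i j)
        ≤ β * (v i (TA σ t i) - ∑ j ∈ TA σ t i, maxOther (B σ t) i j))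
    (haggr : ∀ σ (t : Fin n), ∀ S : Finset (Fin m),
      α * (v (σ t) S - ∑ j ∈ S, maxOther (B σ ((t : ℕ) + 1)) (σ t) j)
        ≤ ∑ j ∈ TA σ ((t : ℕ) + 1) (σ t),
            (B σ ((t : ℕ) + 1) (σ t) j - maxOther (B σ ((t : ℕ) + 1)) (σ t) j))
    (Sstar : Fin n → Finset (Fin m)) (hstar : ∀ j : Fin m, ∃! i : Fin n, j ∈ Sstar i)
    (σ : Fin n → Fin n) :
    α * ∑ i ∈ Finset.univ.image σ, v i (Sstar i)
      ≤ β * (∑ i, v i (TA σ n i)) + α * ∑ j, (Mb B σ 0 j : ℝ) := by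
  classical
  set Act := Finset.univ.image σ with hAct_def
  have hex : ∀ i ∈ Act, ∃ t : Fin n, σ t = i ∧ ∀ r : Fin n, (t:ℕ) < (r:ℕ) → σ r ≠ i := by
    intro i hi
    obtain ⟨t0, -, ht0⟩ := Finset.mem_image.mp hi
    have hne : (Finset.univ.filter fun t => σ t = i).Nonempty := ⟨t0, by simp [ht0]⟩
    refine ⟨(Finset.univ.filter fun t => σ t = i).max' hne, ?_, ?_⟩
    · have := Finset.max'_mem _ hne
      simpa using (Finset.mem_filter.mp this).2
    · intro r hr hc
      have hrmem : r ∈ Finset.univ.filter fun t => σ t = i := by simp [hc]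
      have hle := Finset.le_max' _ r hrmem
      rw [Fin.le_def] at hle
      omega
  set tl : Fin n → Fin n := fun i =>
    if h : ∃ t : Fin n, σ t = i ∧ ∀ r : Fin n, (t:ℕ) < (r:ℕ) → σ r ≠ i then h.choose
    else ⟨0, by omega⟩ with htl_def
  have htl : ∀ i ∈ Act, σ (tl i) = i ∧ ∀ r : Fin n, ((tl i):ℕ) < (r:ℕ) → σ r ≠ i := by
    intro i hi
    have h := hex i hi
    simp only [htl_def, dif_pos h]
    exact h.choose_spec
  have htlub : ∀ i : Fin n, ((tl i):ℕ) + 1 ≤ n := fun i => (tl i).isLt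
  set c : Fin n → Fin m → ℝ := fun i j =>
    if j ∈ TA σ ((tl i : ℕ)+1) i
    then B σ ((tl i:ℕ)+1) i j - maxOther (B σ ((tl i:ℕ)+1)) i j else 0 with hc_def
  have hMb0 : ∀ (t:ℕ) (j : Fin m), t ≤ n → (Qb B σ t j : ℝ) ≤ (Mb B σ 0 j : ℝ) := by
    intro t j ht
    exact NNReal.coe_le_coe.mpr (Finset.le_sup (f := fun t => Qb B σ t j)
      (Finset.mem_Icc.mpr ⟨Nat.zero_le _, ht⟩))
  have hmaxle : ∀ (t:ℕ) (i : Fin n) (j : Fin m), t ≤ n →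
      maxOther (B σ t) i j ≤ (Mb B σ 0 j : ℝ) :=
    fun t i j ht => (maxOther_le_Qb B σ t i j).trans (hMb0 t j ht)
  -- aggressiveness at the last activation
  have hui : ∀ i ∈ Act, α * v i (Sstar i)
      ≤ (∑ j, c i j) + α * ∑ j ∈ Sstar i, (Mb B σ 0 j : ℝ) := by
    intro i hi
    have hσtl : σ (tl i) = i := (htl i hi).1
    have hag := haggr σ (tl i) (Sstar i)
    rw [hσtl] at hag
    have hsum_c : ∑ j, c i j
        = ∑ j ∈ TA σ ((tl i:ℕ)+1) i,
            (B σ ((tl i:ℕ)+1) i j - maxOther (B σ ((tl i:ℕ)+1)) i j) := by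
      simp only [hc_def]
      rw [Finset.sum_ite_mem, Finset.univ_inter]
    have hmo : ∑ j ∈ Sstar i, maxOther (B σ ((tl i:ℕ)+1)) i j
        ≤ ∑ j ∈ Sstar i, (Mb B σ 0 j : ℝ) :=
      Finset.sum_le_sum (fun j _ => hmaxle _ i j (htlub i))
    rw [mul_sub] at hag
    have h2 : α * ∑ j ∈ Sstar i, maxOther (B σ ((tl i:ℕ)+1)) i j
        ≤ α * ∑ j ∈ Sstar i, (Mb B σ 0 j : ℝ) := mul_le_mul_of_nonneg_left hmo hα.le
    rw [hsum_c]
    linarith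
  -- telescoping bound
  have hTel : ∀ N : ℕ, ∀ A : Finset (Fin n), A.card ≤ N → A ⊆ Act → ∀ j : Fin m,
      ∑ i ∈ A, c i j ≤ ((A.sup fun i => Real.toNNReal (B σ n i j) : NNReal) : ℝ) := by
    intro N
    induction N with
    | zero =>
      intro A hA _ j
      rw [Nat.le_zero, Finset.card_eq_zero] at hA
      subst hA; simp
    | succ N ihN =>
      intro A hA hsub j
      rcases Finset.eq_empty_or_nonempty A with rfl | hne
      · simp
      · obtain ⟨istar, histar, hmax⟩ := Finset.exists_max_image A (fun i => ((tl i):ℕ)) hne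
        have hAi : istar ∈ Act := hsub histar
        have hsplit : ∑ i ∈ A, c i j = c istar j + ∑ i ∈ A.erase istar, c i j :=
          (Finset.add_sum_erase A _ histar).symm
        have hIH := ihN (A.erase istar)
          (by rw [Finset.card_erase_of_mem histar]; omega)
          ((Finset.erase_subset _ _).trans hsub) j
        set S' : NNReal := (A.erase istar).sup (fun i => Real.toNNReal (B σ n i j)) with hS'
        have hfinal : ∀ i ∈ Act, B σ n i j = B σ ((tl i:ℕ)+1) i j := by
          intro i hi
          exact persist hupd σ i j ((tl i:ℕ)+1) n (htlub i) le_rfl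
            (fun r hr1 _ => (htl i hi).2 r (by omega))
        have hbid : ∀ i ∈ A.erase istar, B σ n i j = B σ ((tl istar:ℕ)+1) i j := by
          intro i hi
          obtain ⟨hne_i, hiA⟩ := Finset.mem_erase.mp hi
          have hiAct : i ∈ Act := hsub hiA
          have hlt : ((tl i):ℕ) < ((tl istar):ℕ) := by
            rcases Nat.eq_or_lt_of_le (hmax i hiA) with he | h
            · exfalso
              apply hne_i
              have heq : tl i = tl istar := Fin.ext he
              rw [← (htl i hiAct).1, ← (htl istar hAi).1, heq]
            · exact h
          rw [hfinal i hiAct]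
          exact (persist hupd σ i j ((tl i:ℕ)+1) ((tl istar:ℕ)+1) (by omega) (htlub istar)
            (fun r hr1 _ => (htl i hiAct).2 r (by omega))).symm
        by_cases hj : j ∈ TA σ ((tl istar:ℕ)+1) istar
        · have hmo : (S':ℝ) ≤ maxOther (B σ ((tl istar:ℕ)+1)) istar j := by
            unfold maxOther
            apply NNReal.coe_le_coe.mpr
            rw [hS']
            apply Finset.sup_le
            intro i hi
            rw [hbid i hi]
            exact Finset.le_sup (f := fun k => Real.toNNReal (B σ ((tl istar:ℕ)+1) k j))
              (Finset.mem_erase.mpr ⟨(Finset.mem_erase.mp hi).1, Finset.mem_univ i⟩)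
          have hcistar : c istar j ≤ B σ n istar j - (S' : ℝ) := by
            simp only [hc_def]
            rw [if_pos hj, hfinal istar hAi]
            exact sub_le_sub_left hmo _
          calc ∑ i ∈ A, c i j = c istar j + ∑ i ∈ A.erase istar, c i j := hsplit
            _ ≤ (B σ n istar j - (S':ℝ)) + (S':ℝ) := add_le_add hcistar hIH
            _ = B σ n istar j := by ring
            _ = (Real.toNNReal (B σ n istar j) : ℝ) :=
                (Real.coe_toNNReal _ (hnonneg σ n istar j)).symm
            _ ≤ ((A.sup fun i => Real.toNNReal (B σ n i j) : NNReal) : ℝ) :=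
                NNReal.coe_le_coe.mpr (Finset.le_sup (f := fun i => Real.toNNReal (B σ n i j)) histar)
        · have hz : c istar j = 0 := by simp only [hc_def]; rw [if_neg hj]
          rw [hsplit, hz, zero_add]
          exact hIH.trans (NNReal.coe_le_coe.mpr
            (Finset.sup_mono (Finset.erase_subset _ _)))
  -- put it together
  have hsum1 : α * ∑ i ∈ Act, v i (Sstar i)
      ≤ (∑ i ∈ Act, ∑ j, c i j) + α * ∑ i ∈ Act, ∑ j ∈ Sstar i, (Mb B σ 0 j : ℝ) := by
    rw [Finset.mul_sum, Finset.mul_sum, ← Finset.sum_add_distrib]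
    exact Finset.sum_le_sum (fun i hi => hui i hi)
  have hsum2 : ∑ i ∈ Act, ∑ j, c i j ≤ β * ∑ i, v i (TA σ n i) := by
    rw [Finset.sum_comm]
    have h1 : ∀ j : Fin m, ∑ i ∈ Act, c i j ≤ (Qb B σ n j : ℝ) := by
      intro j
      refine (hTel Act.card Act le_rfl Finset.Subset.rfl j).trans ?_
      exact NNReal.coe_le_coe.mpr (Finset.sup_mono (Finset.subset_univ _))
    calc ∑ j, ∑ i ∈ Act, c i j ≤ ∑ j, (Qb B σ n j : ℝ) :=
          Finset.sum_le_sum (fun j _ => h1 j)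
      _ ≤ β * ∑ i, v i (TA σ n i) := sumQ β hβ v B hnonneg TA hpart hwin hsafe σ
  have hsum3 : ∑ i ∈ Act, ∑ j ∈ Sstar i, (Mb B σ 0 j : ℝ) ≤ ∑ j, (Mb B σ 0 j : ℝ) := by
    have hdisj : ∀ i₁ ∈ Act, ∀ i₂ ∈ Act, i₁ ≠ i₂ → Disjoint (Sstar i₁) (Sstar i₂) := by
      intro i₁ _ i₂ _ hne12
      rw [Finset.disjoint_left]
      intro j h1 h2
      obtain ⟨iw, _, hu⟩ := hstar j
      exact hne12 ((hu i₁ h1).trans (hu i₂ h2).symm)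
    rw [← Finset.sum_biUnion hdisj]
    exact Finset.sum_le_sum_of_subset_of_nonneg (Finset.subset_univ _)
      (fun _ _ _ => NNReal.coe_nonneg _)
  have h4 : α * ∑ i ∈ Act, ∑ j ∈ Sstar i, (Mb B σ 0 j : ℝ)
      ≤ α * ∑ j, (Mb B σ 0 j : ℝ) := mul_le_mul_of_nonneg_left hsum3 hα.le
  linarith

/-- Randomized activation welfare guarantee: with `T = n ≥ 2` steps, at each step a bidder
chosen uniformly at random (`σ : Fin n → Fin n` uniform) updates his bid `α`-aggressively,
the bid process is adapted to `σ` and `β`-safe. Then the expected social welfare of the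
final profile is at least `α/(2(1+4α)β)` times the optimal welfare. -/
theorem stmt16 (n m : ℕ) (hn : 2 ≤ n) (α β : ℝ) (hα : 0 < α) (hα1 : α ≤ 1) (hβ : 1 ≤ β)
    (v : Fin n → Finset (Fin m) → ℝ) (hv : ∀ i S, 0 ≤ v i S)
    (B : (Fin n → Fin n) → ℕ → Fin n → Fin m → ℝ)
    (hnonneg : ∀ σ t i j, 0 ≤ B σ t i j)
    -- only the chosen bidder changes his bid at each step
    (hupd : ∀ (σ : Fin n → Fin n) (t : Fin n) (k : Fin n), k ≠ σ t →
      ∀ j, B σ (t : ℕ) k j = B σ ((t : ℕ) + 1) k j)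
    -- the process is adapted: bids at time `t` depend only on the activations before `t`
    (hadapted : ∀ (σ σ' : Fin n → Fin n) (t : ℕ), t ≤ n →
      (∀ s : Fin n, (s : ℕ) < t → σ s = σ' s) → ∀ i j, B σ t i j = B σ' t i j)
    -- `TA σ t i` is the set of items won by bidder `i` at profile `B σ t`
    (TA : (Fin n → Fin n) → ℕ → Fin n → Finset (Fin m))
    (hpart : ∀ σ t, ∀ j : Fin m, ∃! i : Fin n, j ∈ TA σ t i)
    (hwin : ∀ σ t, ∀ i : Fin n, ∀ j ∈ TA σ t i, ∀ k : Fin n, B σ t k j ≤ B σ t i j)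
    -- β-safety at every step
    (hsafe : ∀ σ (t : ℕ), t ≤ n → ∀ i : Fin n,
      ∑ j ∈ TA σ t i, (B σ t i j - maxOther (B σ t) i j)
        ≤ β * (v i (TA σ t i) - ∑ j ∈ TA σ t i, maxOther (B σ t) i j))
    -- each update is α-aggressive
    (haggr : ∀ σ (t : Fin n), ∀ S : Finset (Fin m),
      α * (v (σ t) S - ∑ j ∈ S, maxOther (B σ ((t : ℕ) + 1)) (σ t) j)
        ≤ ∑ j ∈ TA σ ((t : ℕ) + 1) (σ t),
            (B σ ((t : ℕ) + 1) (σ t) j - maxOther (B σ ((t : ℕ) + 1)) (σ t) j)) :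
    ∀ Sstar : Fin n → Finset (Fin m), (∀ j : Fin m, ∃! i : Fin n, j ∈ Sstar i) →
      (α / (2 * (1 + 4 * α) * β)) * ∑ i, v i (Sstar i)
        ≤ (1 / (n : ℝ) ^ n) * ∑ σ : Fin n → Fin n, ∑ i, v i (TA σ n i) := by
  classical
  intro Sstar hstar
  set W : ℝ := ∑ σ : Fin n → Fin n, ∑ i, v i (TA σ n i) with hW_def
  set OPT : ℝ := ∑ i, v i (Sstar i) with hOPT_def
  have hOPTnn : 0 ≤ OPT := Finset.sum_nonneg (fun i _ => hv _ _)
  -- sum the per-σ inequality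
  have h1 : ∑ σ : Fin n → Fin n, (α * ∑ i ∈ Finset.univ.image σ, v i (Sstar i))
      ≤ ∑ σ : Fin n → Fin n, (β * (∑ i, v i (TA σ n i)) + α * ∑ j, (Mb B σ 0 j : ℝ)) :=
    Finset.sum_le_sum (fun σ _ => perSigma hn α β hα hβ v B hnonneg hupd TA hpart hwin
      hsafe haggr Sstar hstar σ)
  -- bound the maximal-bid term
  have h2 : ∑ σ : Fin n → Fin n, ∑ j, (Mb B σ 0 j : ℝ) ≤ 4 * (β * W) := by
    rw [Finset.sum_comm]
    calc ∑ j : Fin m, ∑ σ : Fin n → Fin n, (Mb B σ 0 j : ℝ)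
        ≤ ∑ j : Fin m, 4 * ∑ σ : Fin n → Fin n, (Qb B σ n j : ℝ) :=
          Finset.sum_le_sum (fun j _ => sumM_le_four hn B hupd hadapted j)
      _ = 4 * ∑ σ : Fin n → Fin n, ∑ j, (Qb B σ n j : ℝ) := by
          rw [← Finset.mul_sum, Finset.sum_comm]
      _ ≤ 4 * (β * W) := by
          have hq : ∑ σ : Fin n → Fin n, ∑ j, (Qb B σ n j : ℝ)
              ≤ ∑ σ : Fin n → Fin n, β * ∑ i, v i (TA σ n i) :=
            Finset.sum_le_sum (fun σ _ => sumQ β hβ v B hnonneg TA hpart hwin hsafe σ)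
          rw [← Finset.mul_sum, ← hW_def] at hq
          linarith
  have h3 : α * ∑ σ : Fin n → Fin n, ∑ i ∈ Finset.univ.image σ, v i (Sstar i)
      ≤ β * W + α * (4 * (β * W)) := by
    rw [Finset.mul_sum]
    calc ∑ σ : Fin n → Fin n, (α * ∑ i ∈ Finset.univ.image σ, v i (Sstar i))
        ≤ ∑ σ : Fin n → Fin n, (β * (∑ i, v i (TA σ n i)) + α * ∑ j, (Mb B σ 0 j : ℝ)) := h1
      _ = β * W + α * ∑ σ : Fin n → Fin n, ∑ j, (Mb B σ 0 j : ℝ) := by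
          rw [Finset.sum_add_distrib, ← Finset.mul_sum, ← Finset.mul_sum, ← hW_def]
      _ ≤ β * W + α * (4 * (β * W)) := by
          have := mul_le_mul_of_nonneg_left h2 hα.le
          linarith
  -- counting: each bidder is activated in at least half the activation sequences
  have hcount : ∀ i : Fin n, ((n:ℝ))^n ≤ 2 *
      (((Finset.univ.filter fun σ : Fin n → Fin n => i ∈ Finset.univ.image σ).card : ℕ) : ℝ) := by
    intro i
    have hneg : (Finset.univ.filter fun σ : Fin n → Fin n =>
        ¬ i ∈ Finset.univ.image σ).card = (n-1)^n := by
      have hcc := card_filterClass n 0 (fun _ => (⟨0, by omega⟩ : Fin n)) (Finset.univ.erase i)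
      rw [Finset.card_erase_of_mem (Finset.mem_univ i), Finset.card_univ, Fintype.card_fin,
        Nat.sub_zero] at hcc
      rw [← hcc]
      congr 1
      apply Finset.filter_congr
      intro σ _
      constructor
      · intro h t
        constructor
        · intro ht
          exact absurd ht (Nat.not_lt_zero _)
        · intro _
          rw [Finset.mem_erase]
          constructor
          · intro hc
            exact h (Finset.mem_image.mpr ⟨t, Finset.mem_univ t, hc⟩)
          · exact Finset.mem_univ _
      · intro h hc
        obtain ⟨t, -, ht⟩ := Finset.mem_image.mp hc
        exact (Finset.mem_erase.mp ((h t).2 (Nat.zero_le _))).1 ht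
    have hpos := Finset.card_filter_add_card_filter_not
      (s := (Finset.univ : Finset (Fin n → Fin n)))
      (p := fun σ : Fin n → Fin n => i ∈ Finset.univ.image σ)
    have huniv : (Finset.univ : Finset (Fin n → Fin n)).card = n^n := by
      rw [Finset.card_univ, Fintype.card_fun, Fintype.card_fin]
    have h2n := aux_two n (by omega)
    have hnat : n^n ≤ 2 * (Finset.univ.filter fun σ : Fin n → Fin n =>
        i ∈ Finset.univ.image σ).card := by omega
    exact_mod_cast hnat
  -- lower bound for the activated-welfare sum
  have hAsum : ((n:ℝ)^n / 2) * OPT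
      ≤ ∑ σ : Fin n → Fin n, ∑ i ∈ Finset.univ.image σ, v i (Sstar i) := by
    have e1 : ∀ σ : Fin n → Fin n, ∑ i ∈ Finset.univ.image σ, v i (Sstar i)
        = ∑ i : Fin n, if i ∈ Finset.univ.image σ then v i (Sstar i) else 0 := by
      intro σ
      rw [Finset.sum_ite_mem, Finset.univ_inter]
    rw [Finset.sum_congr rfl (fun σ _ => e1 σ), Finset.sum_comm]
    have e2 : ∀ i : Fin n, ∑ σ : Fin n → Fin n,
        (if i ∈ Finset.univ.image σ then v i (Sstar i) else 0)
        = (((Finset.univ.filter fun σ : Fin n → Fin n =>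
            i ∈ Finset.univ.image σ).card : ℕ) : ℝ) * v i (Sstar i) := by
      intro i
      rw [Finset.sum_ite, Finset.sum_const, Finset.sum_const_zero, add_zero, nsmul_eq_mul]
    rw [Finset.sum_congr rfl (fun i _ => e2 i), hOPT_def, Finset.mul_sum]
    apply Finset.sum_le_sum
    intro i _
    have := hcount i
    nlinarith [hv i (Sstar i)]
  -- final arithmetic
  have hWnn : 0 ≤ W := Finset.sum_nonneg (fun σ _ => Finset.sum_nonneg (fun i _ => hv _ _))
  have hβ0 : (0:ℝ) < β := lt_of_lt_of_le one_pos hβ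
  have hfactor : (0:ℝ) < 1 + 4*α := by linarith
  have hDpos : (0:ℝ) < 2*(1+4*α)*β := by positivity
  have hn2 : (2:ℝ) ≤ (n:ℝ) := by exact_mod_cast hn
  have hNpos : (0:ℝ) < (n:ℝ)^n := by positivity
  have hchain : α * (((n:ℝ)^n / 2) * OPT) ≤ β * W + α * (4 * (β * W)) :=
    (mul_le_mul_of_nonneg_left hAsum hα.le).trans h3
  have target : α * OPT * (n:ℝ)^n ≤ W * (2*(1+4*α)*β) := by nlinarith
  rw [div_mul_eq_mul_div, div_le_iff₀ hDpos,
    show (1/(n:ℝ)^n) * W * (2*(1+4*α)*β) = (W*(2*(1+4*α)*β))/(n:ℝ)^n from by ring,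
    le_div_iff₀ hNpos]
  exact target
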